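/- Let (i_2,...,i_n) be a dominant sequence of weight N ≥ 2 and let P_{i_2,...,i_n} ∈ ℤ[X_1,...,X_N] be defined by the recursion (P_{(2)} = (X_1-2)(X_1-1), P_{(0,1)} = X_1-1, inductive formula for weight ≥ 3). If p_1 < p_2 < ... < p_N are natural numbers with 1 ≤ p_1 and p_N ≤ 2i_2 + 3i_3 + ... + n·i_n - 2, then P_{i_2,...,i_n}(p_1,...,p_N) = 0. -/

import Mathlib

open MvPolynomial


lemma sum_add_single (c : ℕ → ℕ) (f g : ℕ →₀ ℕ) (a : ℕ)
    (hg : g = f + Finsupp.single a 1) :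
    ∑ k ∈ g.support, c k * g k = (∑ k ∈ f.support, c k * f k) + c a := by
  subst hg
  have h := Finsupp.sum_add_index' (f := f) (g := Finsupp.single a 1)
    (h := fun k m => c k * m) (fun b => by simp) (fun b m₁ m₂ => by ring)
  simp only [Finsupp.sum] at h
  rw [h]
  congr 1
  rw [Finsupp.support_single_ne_zero a (by norm_num)]
  simp

lemma sum_move (c : ℕ → ℕ) (i i' : ℕ →₀ ℕ) (j : ℕ) (hj1 : 1 ≤ j) (hij : 1 ≤ i j)
    (hi' : i' = i + Finsupp.single (j - 1) 1 - Finsupp.single j 1) :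
    (∑ k ∈ i'.support, c k * i' k) + c j
      = (∑ k ∈ i.support, c k * i k) + c (j - 1) := by
  have h2 : i' = (i - Finsupp.single j 1) + Finsupp.single (j - 1) 1 := by
    rw [hi']
    ext k
    simp only [Finsupp.tsub_apply, Finsupp.add_apply, Finsupp.single_apply]
    split_ifs <;> omega
  have h1 : i = (i - Finsupp.single j 1) + Finsupp.single j 1 :=
    (tsub_add_cancel_of_le (by rwa [Finsupp.single_le_iff])).symm
  have h3 := sum_add_single c (i - Finsupp.single j 1) i j h1
  rw [sum_add_single c (i - Finsupp.single j 1) i' (j - 1) h2, h3]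
  omega

lemma sum_sub (c : ℕ → ℕ) (i i' : ℕ →₀ ℕ) (a : ℕ) (hia : 1 ≤ i a)
    (hi' : i' = i - Finsupp.single a 1) :
    (∑ k ∈ i'.support, c k * i' k) + c a = ∑ k ∈ i.support, c k * i k := by
  have h1 : i = i' + Finsupp.single a 1 := by
    rw [hi']; exact (tsub_add_cancel_of_le (by rwa [Finsupp.single_le_iff])).symm
  rw [sum_add_single c i' i a h1]

lemma classify (i : ℕ →₀ ℕ) (h0 : i 0 = 0) (h1 : i 1 = 0)
    (hw : ∑ k ∈ i.support, (k - 1) * i k = 2) :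
    i = Finsupp.single 2 2 ∨ i = Finsupp.single 3 1 := by
  have hsup : ∀ k ∈ i.support, k = 2 ∨ k = 3 := by
    intro k hk
    have hik : 1 ≤ i k := Nat.one_le_iff_ne_zero.mpr (Finsupp.mem_support_iff.mp hk)
    have hk2 : 2 ≤ k := by
      rcases Nat.lt_or_ge k 2 with h | h
      · interval_cases k <;> omega
      · exact h
    have hle : (k - 1) * i k ≤ 2 := by
      rw [← hw]
      exact Finset.single_le_sum (f := fun k => (k - 1) * i k) (fun _ _ => Nat.zero_le _) hk
    have hge : k - 1 ≤ (k - 1) * i k := Nat.le_mul_of_pos_right _ (by omega)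
    omega
  have hzero : ∀ k, k ≠ 2 → k ≠ 3 → i k = 0 := by
    intro k h2 h3
    by_contra h
    rcases hsup k (Finsupp.mem_support_iff.mpr h) with h' | h' <;> omega
  have hsum : i 2 + 2 * i 3 = 2 := by
    have hsub : i.support ⊆ ({2, 3} : Finset ℕ) := by
      intro k hk
      rcases hsup k hk with h | h <;> simp [h]
    have he := Finset.sum_subset hsub (f := fun k => (k - 1) * i k)
      (fun k _ hk => by beta_reduce; rw [Finsupp.notMem_support_iff.mp hk]; ring)
    rw [hw] at he
    rw [Finset.sum_pair (by norm_num : (2:ℕ) ≠ 3)] at he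
    omega
  have hcase : (i 2 = 2 ∧ i 3 = 0) ∨ (i 2 = 0 ∧ i 3 = 1) := by omega
  rcases hcase with ⟨h2, h3⟩ | ⟨h2, h3⟩
  · left
    ext k
    rcases eq_or_ne k 2 with rfl | hk2
    · simp [h2]
    rcases eq_or_ne k 3 with rfl | hk3
    · simp [h3, Finsupp.single_apply]
    · rw [hzero k hk2 hk3, Finsupp.single_apply]
      simp [Ne.symm hk2]
  · right
    ext k
    rcases eq_or_ne k 2 with rfl | hk2
    · simp [h2, Finsupp.single_apply]
    rcases eq_or_ne k 3 with rfl | hk3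
    · simp [h3]
    · rw [hzero k hk2 hk3, Finsupp.single_apply]
      simp [Ne.symm hk3]

lemma apply_small (i i' : ℕ →₀ ℕ) (j : ℕ) (hj : 3 ≤ j)
    (hi' : i' = i + Finsupp.single (j - 1) 1 - Finsupp.single j 1)
    (k : ℕ) (hk : k < 2) (h : i k = 0) : i' k = 0 := by
  subst hi'
  simp only [Finsupp.tsub_apply, Finsupp.add_apply, Finsupp.single_apply]
  split_ifs <;> omega

lemma apply_sub2 (i i' : ℕ →₀ ℕ) (hi' : i' = i - Finsupp.single 2 1)
    (k : ℕ) (hk : k < 2) (h : i k = 0) : i' k = 0 := by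
  subst hi'
  simp only [Finsupp.tsub_apply, Finsupp.single_apply]
  split_ifs <;> omega

lemma key
    (P : (ℕ →₀ ℕ) → MvPolynomial ℕ ℤ)
    (hP2 : P (Finsupp.single 2 2) = (X 1 - C 2) * (X 1 - C 1))
    (hP01 : P (Finsupp.single 3 1) = X 1 - C 1)
    (hPrec : ∀ i : ℕ →₀ ℕ, i 0 = 0 → i 1 = 0 →
      2 ≤ (∑ k ∈ i.support, (k - 1) * i k) - 1 →
      P i = (∑ j ∈ i.support.filter fun j => 3 ≤ j,
              C ((i (j - 1) : ℤ) + 1)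
                * P (i + Finsupp.single (j - 1) 1 - Finsupp.single j 1))
        + (if 1 ≤ i 2 then
            (X ((∑ k ∈ i.support, (k - 1) * i k) - 1)
                - C (((∑ k ∈ i.support, k * i k : ℕ) : ℤ) - 2))
              * P (i - Finsupp.single 2 1)
          else 0)) :
    ∀ N : ℕ, 1 ≤ N → ∀ i : ℕ →₀ ℕ, i 0 = 0 → i 1 = 0 →
      N = (∑ k ∈ i.support, (k - 1) * i k) - 1 →
      ∀ p : ℕ → ℕ, 1 ≤ p 1 → (∀ k, 1 ≤ k → k < N → p k < p (k + 1)) →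
        p N ≤ (∑ k ∈ i.support, k * i k) - 2 →
        MvPolynomial.eval (fun k => (p k : ℤ)) (P i) = 0 := by
  intro N
  induction N using Nat.strong_induction_on with
  | _ N IH =>
  intro hN1 i h0 h1 hw p hp1 hmono hpS
  rcases eq_or_lt_of_le hN1 with hN | hN2
  · -- base case N = 1
    have hL : (∑ k ∈ i.support, (k - 1) * i k) = 2 := by omega
    subst hN
    rcases classify i h0 h1 hL with hi | hi
    · subst hi
      have hs : (Finsupp.single 2 2 : ℕ →₀ ℕ).support = {2} :=
        Finsupp.support_single_ne_zero 2 (by norm_num)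
      rw [hs] at hpS
      simp only [Finset.sum_singleton, Finsupp.single_eq_same] at hpS
      have hp : p 1 = 1 ∨ p 1 = 2 := by omega
      rw [hP2]
      simp only [map_mul, map_sub, eval_X, eval_C]
      rcases hp with hp | hp <;> rw [hp] <;> norm_num
    · subst hi
      have hs : (Finsupp.single 3 1 : ℕ →₀ ℕ).support = {3} :=
        Finsupp.support_single_ne_zero 3 (by norm_num)
      rw [hs] at hpS
      simp only [Finset.sum_singleton, Finsupp.single_eq_same] at hpS
      have hp : p 1 = 1 := by omega
      rw [hP01]
      simp only [map_sub, eval_X, eval_C]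
      rw [hp]
      norm_num
  · -- inductive step N ≥ 2
    have hL : (∑ k ∈ i.support, (k - 1) * i k) = N + 1 := by omega
    have hpk : ∀ k, 1 ≤ k → k ≤ N → k ≤ p k := by
      intro k
      induction k with
      | zero => omega
      | succ k ih =>
        intro _ hk
        by_cases hk0 : k = 0
        · subst hk0; simpa using hp1
        · have h1k : 1 ≤ k := by omega
          have := hmono k h1k (by omega)
          have := ih h1k (by omega)
          omega
    have hpNge : N ≤ p N := hpk N (by omega) le_rfl
    rw [hPrec i h0 h1 (by omega), hL]
    simp only [Nat.add_sub_cancel, map_add, map_sum, map_mul, eval_C]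
    have hterm1 : (∑ j ∈ i.support.filter fun j => 3 ≤ j,
        ((i (j - 1) : ℤ) + 1) * eval (fun k => (p k : ℤ))
          (P (i + Finsupp.single (j - 1) 1 - Finsupp.single j 1))) = 0 := by
      apply Finset.sum_eq_zero
      intro j hj
      rw [Finset.mem_filter] at hj
      obtain ⟨hjs, hj3⟩ := hj
      have hij : 1 ≤ i j := Nat.one_le_iff_ne_zero.mpr (Finsupp.mem_support_iff.mp hjs)
      have hmw := sum_move (fun k => k - 1) i _ j (by omega) hij rfl
      have hms := sum_move (fun k => k) i _ j (by omega) hij rfl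
      beta_reduce at hmw hms
      have hz : eval (fun k => (p k : ℤ))
          (P (i + Finsupp.single (j - 1) 1 - Finsupp.single j 1)) = 0 := by
        apply IH (N - 1) (by omega) (by omega) _
          (apply_small i _ j hj3 rfl 0 (by norm_num) h0)
          (apply_small i _ j hj3 rfl 1 (by norm_num) h1)
          (by omega) p hp1 (fun k hk1 hk2 => hmono k hk1 (by omega))
        have hlt : p (N - 1) < p (N - 1 + 1) := hmono (N - 1) (by omega) (by omega)
        have hNN : N - 1 + 1 = N := by omega
        rw [hNN] at hlt
        omega
      rw [hz, mul_zero]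
    rw [hterm1, zero_add]
    by_cases hi2 : 1 ≤ i 2
    · rw [if_pos hi2, map_mul, map_sub, eval_X, eval_C]
      by_cases hpN : p N = (∑ k ∈ i.support, k * i k) - 2
      · have hS4 : 4 ≤ ∑ k ∈ i.support, k * i k := by omega
        have hz : ((p N : ℕ) : ℤ) - (((∑ k ∈ i.support, k * i k : ℕ) : ℤ) - 2) = 0 := by
          omega
        rw [hz, zero_mul]
      · have hss := sum_sub (fun k => k - 1) i _ 2 hi2 rfl
        have hss2 := sum_sub (fun k => k) i _ 2 hi2 rfl
        beta_reduce at hss hss2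
        have hz : eval (fun k => (p k : ℤ)) (P (i - Finsupp.single 2 1)) = 0 := by
          apply IH (N - 1) (by omega) (by omega) _
            (apply_sub2 i _ rfl 0 (by norm_num) h0)
            (apply_sub2 i _ rfl 1 (by norm_num) h1)
            (by omega) p hp1 (fun k hk1 hk2 => hmono k hk1 (by omega))
          have hlt : p (N - 1) < p (N - 1 + 1) := hmono (N - 1) (by omega) (by omega)
          have hNN : N - 1 + 1 = N := by omega
          rw [hNN] at hlt
          omega
        rw [hz, mul_zero]
    · rw [if_neg hi2, map_zero]

/-- Let `P` be the polynomials indexed by dominant sequences `(i_2,…,i_n)` (encoded as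
finitely supported functions `i : ℕ →₀ ℕ` vanishing at `0` and `1`, `i k` being the
multiplicity `i_k`; trailing zeros are automatically absent, so the truncation `∂` is the
identity in this encoding), of weight `ω = Σ_{k ≥ 2} (k-1) i_k - 1`, defined by
`P_{(1)} = X_1`, `P_{(2)} = (X_1-2)(X_1-1)`, `P_{(0,1)} = X_1-1` and, for weight `≥ 2`,
`P_{i_2,…,i_n} = Σ_{j ≥ 3, i_j ≥ 1} (i_{j-1}+1) P_{∂(i_2,…,i_{j-1}+1,i_j-1,…,i_n)}
  + [i_2 ≥ 1](X_ω - 2i_2 - … - n i_n + 2) P_{∂(i_2-1,i_3,…,i_n)}`.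
If `(i_2,…,i_n)` is a dominant sequence of weight `N ≥ 2` and `1 ≤ p_1 < … < p_N` are
natural numbers with `p_N ≤ 2i_2 + 3i_3 + … + n·i_n - 2`, then
`P_{i_2,…,i_n}(p_1,…,p_N) = 0`. -/
theorem poly_P_eval_eq_zero
    (P : (ℕ →₀ ℕ) → MvPolynomial ℕ ℤ)
    (hP1 : P (Finsupp.single 2 1) = X 1)
    (hP2 : P (Finsupp.single 2 2) = (X 1 - C 2) * (X 1 - C 1))
    (hP01 : P (Finsupp.single 3 1) = X 1 - C 1)
    (hPrec : ∀ i : ℕ →₀ ℕ, i 0 = 0 → i 1 = 0 →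
      2 ≤ (∑ k ∈ i.support, (k - 1) * i k) - 1 →
      P i = (∑ j ∈ i.support.filter fun j => 3 ≤ j,
              C ((i (j - 1) : ℤ) + 1)
                * P (i + Finsupp.single (j - 1) 1 - Finsupp.single j 1))
        + (if 1 ≤ i 2 then
            (X ((∑ k ∈ i.support, (k - 1) * i k) - 1)
                - C (((∑ k ∈ i.support, k * i k : ℕ) : ℤ) - 2))
              * P (i - Finsupp.single 2 1)
          else 0)) :
    ∀ (i : ℕ →₀ ℕ) (N : ℕ), i 0 = 0 → i 1 = 0 →
      N = (∑ k ∈ i.support, (k - 1) * i k) - 1 → 2 ≤ N →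
      ∀ p : ℕ → ℕ, 1 ≤ p 1 → (∀ k, 1 ≤ k → k < N → p k < p (k + 1)) →
        p N ≤ (∑ k ∈ i.support, k * i k) - 2 →
        MvPolynomial.eval (fun k => (p k : ℤ)) (P i) = 0 := by
  intro i N h0 h1 hN hN2 p hp1 hmono hpS
  exact key P hP2 hP01 hPrec N (by omega) i h0 h1 hN p hp1 hmono hpS
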